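/- arXiv:2404.10521 — 3 statements merged into one kernel-verified Lean document; each statement's English description precedes it below -/
import Mathlib

section
/- Let A be a finite commutative unitary ring with A ≠ {0} and let R be a nonempty subset of A closed under addition. Then there are only finitely many irreducible λ-quiddities over R; more precisely, there exists an integer L such that every irreducible λ-quiddity over R has size at most L (in fact every λ-quiddity over R of size at least |SL₂(A)| + 1 is reducible). -/
/-- The matrix `[[a, -1], [1, 0]]`. -/
def mMat {A : Type*} [CommRing A] (a : A) : Matrix (Fin 2) (Fin 2) A := !![a, -1; 1, 0]

/-- `M_n(a₁, …, aₙ) = mMat aₙ * ⋯ * mMat a₁`, for the tuple given as a list `[a₁, …, aₙ]`. -/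
def mProd {A : Type*} [CommRing A] (l : List A) : Matrix (Fin 2) (Fin 2) A :=
  ((l.map mMat).reverse).prod

/-- The sum `(a₁,…,aₙ) ⊕ (b₁,…,b_m) = (a₁+b_m, a₂,…,a_{n−1}, aₙ+b₁, b₂,…,b_{m−1})`. -/
def oplus {A : Type*} [CommRing A] (a b : List A) : List A :=
  (a.headD 0 + b.getLastD 0) ::
    (a.dropLast.tail ++ (a.getLastD 0 + b.headD 0) :: b.dropLast.tail)

/-- Two tuples are equivalent if one is a cyclic rotation of the other or of its reversal. -/
def TupEquiv {A : Type*} (a b : List A) : Prop :=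
  (∃ k, b = a.rotate k) ∨ (∃ k, b = a.reverse.rotate k)

/-- A λ-quiddity over `R ⊆ A`: all entries lie in `R` and `M_n(a₁,…,aₙ) = ± Id`. -/
def IsQuiddity {A : Type*} [CommRing A] (R : Set A) (c : List A) : Prop :=
  (∀ x ∈ c, x ∈ R) ∧ (mProd c = 1 ∨ mProd c = -1)

/-- A λ-quiddity `c` over `R` is reducible if `c ∼ a ⊕ b` with `a ∈ R^m`, `m ≥ 3`,
and `b` a λ-quiddity over `R` of size `l ≥ 3`. -/
def IsReducible {A : Type*} [CommRing A] (R : Set A) (c : List A) : Prop :=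
  ∃ a b : List A, 3 ≤ a.length ∧ 3 ≤ b.length ∧ (∀ x ∈ a, x ∈ R) ∧
    IsQuiddity R b ∧ TupEquiv c (oplus a b)

/-- An irreducible λ-quiddity over `R`: a λ-quiddity of size `≥ 3` which is not reducible. -/
def IrreducibleQuiddity {A : Type*} [CommRing A] (R : Set A) (c : List A) : Prop :=
  IsQuiddity R c ∧ 3 ≤ c.length ∧ ¬ IsReducible R c

/-- The continuant `K_i(a₁,…,a_i)`, determinant of the tridiagonal matrix with diagonal
`a₁,…,a_i` and off-diagonal entries `1`; `K₀ = 1`. -/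
def cont {A : Type*} [CommRing A] : List A → A
  | [] => 1
  | [a] => a
  | a :: b :: l => a * cont (b :: l) - cont l

section Aux
variable {A : Type*} [CommRing A]

lemma mProd_nil : mProd ([] : List A) = 1 := rfl

lemma mProd_cons (x : A) (l : List A) : mProd (x :: l) = mProd l * mMat x := by
  simp [mProd]

lemma mProd_append (u v : List A) : mProd (u ++ v) = mProd v * mProd u := by
  simp [mProd]

lemma mProd_singleton (x : A) : mProd [x] = mMat x := by simp [mProd]

lemma det_mMat (a : A) : (mMat a).det = 1 := by
  simp [mMat, Matrix.det_fin_two_of]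

lemma det_mProd (l : List A) : (mProd l).det = 1 := by
  induction l with
  | nil => simp [mProd_nil]
  | cons x l ih => rw [mProd_cons, Matrix.det_mul, ih, det_mMat, one_mul]

lemma S_mul_S : mMat (0 : A) * mMat 0 = -1 := by
  ext i j
  fin_cases i <;> fin_cases j <;>
    simp [mMat, Matrix.mul_apply, Fin.sum_univ_two, Matrix.one_apply]

def sProd (l : List A) : Matrix.SpecialLinearGroup (Fin 2) A := ⟨mProd l, det_mProd l⟩

lemma sProd_append (u v : List A) : sProd (u ++ v) = sProd v * sProd u :=
  Subtype.ext (by rw [Matrix.SpecialLinearGroup.coe_mul]; exact mProd_append u v)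

/-- product of the "capped" tuple `0 :: X ++ [0]`. -/
lemma mProd_capped (X : List A) :
    mProd (0 :: X ++ [0]) = (mMat 0 * mProd X) * mMat 0 := by
  rw [List.cons_append, mProd_cons, mProd_append, mProd_singleton]

lemma oplus_capped (a X : List A) (ha : 2 ≤ a.length) :
    oplus a (0 :: X ++ [0]) = a ++ X := by
  rcases a with _ | ⟨x, m⟩
  · simp at ha
  rcases m.eq_nil_or_concat with rfl | ⟨ys, z, rfl⟩
  · simp at ha
  simp only [List.concat_eq_append]
  have e1 : ((0 :: X) ++ [0]).getLastD 0 = 0 := List.getLastD_concat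
  have e2 : ((0 :: X) ++ [0]).dropLast = 0 :: X := List.dropLast_concat ..
  have e3 : ((x :: ys) ++ [z]).getLastD 0 = z := List.getLastD_concat
  have e4 : ((x :: ys) ++ [z]).dropLast = x :: ys := List.dropLast_concat ..
  show oplus ((x :: ys) ++ [z]) ((0 :: X) ++ [0]) = ((x :: ys) ++ [z]) ++ X
  rw [oplus, e1, e2, e3, e4]
  simp

lemma zero_mem_of_closed [Fintype A] (R : Set A) (hR : R.Nonempty)
    (hadd : ∀ x ∈ R, ∀ y ∈ R, x + y ∈ R) : (0 : A) ∈ R := by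
  obtain ⟨r, hr⟩ := hR
  have key : ∀ k : ℕ, (k + 1) • r ∈ R := by
    intro k
    induction k with
    | zero => simpa using hr
    | succ k ih => rw [succ_nsmul]; exact hadd _ ih _ hr
  have hpos : 0 < addOrderOf r := addOrderOf_pos r
  have h0 : addOrderOf r • r = 0 := addOrderOf_nsmul_eq_zero r
  have := key (addOrderOf r - 1)
  rwa [Nat.sub_add_cancel hpos, h0] at this

end Aux

section Main
variable {A : Type*} [CommRing A] [Fintype A] [Nontrivial A]

lemma four_le_card :
    4 ≤ Nat.card (Matrix.SpecialLinearGroup (Fin 2) A) := by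
  have d1 : (!![1,0;0,1] : Matrix (Fin 2) (Fin 2) A).det = 1 := by
    simp [Matrix.det_fin_two_of]
  have d2 : (!![1,1;0,1] : Matrix (Fin 2) (Fin 2) A).det = 1 := by
    simp [Matrix.det_fin_two_of]
  have d3 : (!![1,0;1,1] : Matrix (Fin 2) (Fin 2) A).det = 1 := by
    simp [Matrix.det_fin_two_of]
  have d4 : (!![0,-1;1,0] : Matrix (Fin 2) (Fin 2) A).det = 1 := by
    simp [Matrix.det_fin_two_of]
  let f : Fin 4 → Matrix.SpecialLinearGroup (Fin 2) A :=
    ![⟨_, d1⟩, ⟨_, d2⟩, ⟨_, d3⟩, ⟨_, d4⟩]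
  have hinj : Function.Injective f := by
    intro a b hab
    fin_cases a <;> fin_cases b <;> try rfl
    all_goals
      exfalso
      simp only [f, Fin.mk_zero, Fin.mk_one, Fin.isValue, Matrix.cons_val_zero,
        Matrix.cons_val_one, Matrix.head_cons, Subtype.mk.injEq,
        show ((⟨2, by norm_num⟩ : Fin 4) = 2) from rfl,
        show ((⟨3, by norm_num⟩ : Fin 4) = 3) from rfl,
        Matrix.cons_val_two, Matrix.cons_val_three, Matrix.tail_cons] at hab
      replace hab := congrArg Subtype.val hab
      rw [← Matrix.ext_iff] at hab
      first
        | exact (by simpa using hab 0 0 : False)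
        | exact (by simpa using hab 0 1 : False)
        | exact (by simpa using hab 1 0 : False)
  calc 4 = Nat.card (Fin 4) := by simp
    _ ≤ _ := Nat.card_le_card_of_injective f hinj

lemma reducible_of_seg (R : Set A) (h0 : (0:A) ∈ R) (c : List A) (hc : IsQuiddity R c)
    (h5 : 5 ≤ c.length) {i j : ℕ} (hij : i < j) (hjn : j < c.length)
    (hs : sProd (c.take i) = sProd (c.take j)) : IsReducible R c := by
  set n := c.length with hn
  set u := c.take i with hu
  set v := (c.drop i).take (j - i) with hv
  set w := c.drop j with hw
  have hlu : u.length = i := by rw [hu, List.length_take]; omega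
  have hlv : v.length = j - i := by
    rw [hv, List.length_take, List.length_drop]; omega
  have hlw : w.length = n - j := by rw [hw, List.length_drop]
  have htj : c.take j = u ++ v := by
    have hj' : j = i + (j - i) := by omega
    rw [hu, hv, ← List.take_add, ← hj']
  have hdi : c.drop i = v ++ w := by
    have : (c.drop i).drop (j - i) = c.drop j := by
      rw [List.drop_drop]
      congr 1
      omega
    rw [hv, hw, ← this, List.take_append_drop]
  have hcsplit : c = u ++ v ++ w := by
    conv_lhs => rw [← List.take_append_drop j c]
    rw [htj, hw]
  have hmem : ∀ x, (x ∈ u ∨ x ∈ v ∨ x ∈ w) → x ∈ R := by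
    intro x hx
    apply hc.1
    rw [hcsplit]
    simp only [List.mem_append]
    tauto
  -- the middle segment has product 1
  have hv1 : mProd v = 1 := by
    have h1 : sProd v * sProd u = sProd u := by
      rw [← sProd_append, ← htj, ← hs]
    have h2 : sProd v = (1 : Matrix.SpecialLinearGroup (Fin 2) A) :=
      mul_right_cancel (b := sProd u) (by rw [h1, one_mul])
    have := congrArg Subtype.val h2
    simpa [sProd] using this
  -- the complement has product ±1
  have hwu : mProd (w ++ u) = 1 ∨ mProd (w ++ u) = -1 := by
    have hcp : mProd c = mProd w * mProd u := by
      rw [hcsplit, mProd_append, mProd_append, hv1, one_mul]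
    rw [mProd_append]
    rcases hc.2 with h | h
    · left
      rw [hcp] at h
      exact mul_eq_one_comm.mp h
    · right
      rw [hcp] at h
      have : (-mProd w) * mProd u = 1 := by rw [neg_mul, h, neg_neg]
      have h2 := mul_eq_one_comm.mp this
      rw [mul_neg] at h2
      rw [← neg_neg (mProd u * mProd w), h2]
  by_cases hcase : 3 ≤ (n - j) + i
  · -- use the complement as `a` and the middle segment for `b`
    refine ⟨w ++ u, 0 :: v ++ [0], ?_, ?_, ?_, ⟨?_, ?_⟩, ?_⟩
    · rw [List.length_append, hlw, hlu]; omega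
    · simp only [List.cons_append, List.length_cons, List.length_append,
        List.length_singleton]; omega
    · intro x hx
      rw [List.mem_append] at hx
      exact hmem x (by tauto)
    · intro x hx
      rw [List.cons_append] at hx
      rcases List.mem_cons.mp hx with rfl | hx'
      · exact h0
      rcases List.mem_append.mp hx' with hx2 | hx2
      · exact hmem x (by tauto)
      · rw [List.mem_singleton] at hx2; subst hx2; exact h0
    · right
      rw [mProd_capped, hv1, mul_one, S_mul_S]
    · left
      refine ⟨j, ?_⟩
      rw [oplus_capped _ _ (by rw [List.length_append, hlw, hlu]; omega),
        List.rotate_eq_drop_append_take hjn.le, htj, ← hw, List.append_assoc]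
  · -- the complement is short; use the middle segment as `a`
    refine ⟨v, 0 :: (w ++ u) ++ [0], ?_, ?_, ?_, ⟨?_, ?_⟩, ?_⟩
    · rw [hlv]; omega
    · simp only [List.cons_append, List.length_cons, List.length_append,
        List.length_singleton]; omega
    · intro x hx
      exact hmem x (by tauto)
    · intro x hx
      rw [List.cons_append] at hx
      rcases List.mem_cons.mp hx with rfl | hx'
      · exact h0
      rcases List.mem_append.mp hx' with hx2 | hx2
      · rcases List.mem_append.mp hx2 with h3 | h3 <;> exact hmem x (by tauto)
      · rw [List.mem_singleton] at hx2; subst hx2; exact h0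
    · rcases hwu with h | h
      · right
        rw [mProd_capped, h, mul_one, S_mul_S]
      · left
        rw [mProd_capped, h, mul_neg_one, neg_mul, S_mul_S, neg_neg]
    · left
      refine ⟨i, ?_⟩
      rw [oplus_capped _ _ (by rw [hlv]; omega),
        List.rotate_eq_drop_append_take (by omega), hdi, ← hu, List.append_assoc]

end Main

/-- Over a finite nontrivial commutative ring `A`, for any nonempty `R ⊆ A` closed under
addition, there are finitely many irreducible λ-quiddities over `R`; the size of irreducible
λ-quiddities over `R` is bounded, and every λ-quiddity over `R` of size at least
`|SL₂(A)| + 1` is reducible. -/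

theorem stmt0 {A : Type*} [CommRing A] [Fintype A] [Nontrivial A]
    (R : Set A) (hR : R.Nonempty) (hadd : ∀ x ∈ R, ∀ y ∈ R, x + y ∈ R) :
    {c : List A | IrreducibleQuiddity R c}.Finite ∧
    (∃ L : ℕ, ∀ c : List A, IrreducibleQuiddity R c → c.length ≤ L) ∧
    (∀ c : List A, IsQuiddity R c →
      Nat.card (Matrix.SpecialLinearGroup (Fin 2) A) + 1 ≤ c.length →
      IsReducible R c) := by
  have h0 : (0 : A) ∈ R := zero_mem_of_closed R hR hadd
  set g := Nat.card (Matrix.SpecialLinearGroup (Fin 2) A) with hg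
  have hkey : ∀ c : List A, IsQuiddity R c → g + 1 ≤ c.length → IsReducible R c := by
    intro c hc hn
    have h4 : 4 ≤ g := four_le_card
    have h5 : 5 ≤ c.length := by omega
    have : Fintype (Matrix.SpecialLinearGroup (Fin 2) A) := Fintype.ofFinite _
    obtain ⟨i, j, hne, heq⟩ := Fintype.exists_ne_map_eq_of_card_lt
      (fun k : Fin c.length => sProd (c.take (k : ℕ)))
      (by rw [Fintype.card_fin, ← Nat.card_eq_fintype_card, ← hg]; omega)
    rcases hne.lt_or_gt with hlt | hlt
    · exact reducible_of_seg R h0 c hc h5 hlt j.isLt heq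
    · exact reducible_of_seg R h0 c hc h5 hlt i.isLt heq.symm
  refine ⟨?_, ⟨g, fun c hcI => ?_⟩, fun c hc hn => hkey c hc hn⟩
  · apply (List.finite_length_le A g).subset
    intro c hcI
    simp only [Set.mem_setOf_eq] at hcI ⊢
    by_contra hlen
    exact hcI.2.2 (hkey c hcI.1 (by omega))
  · by_contra hlen
    exact hcI.2.2 (hkey c hcI.1 (by omega))
end

section
/- The set of irreducible λ-quiddities over ℤ is exactly {(1,1,1), (−1,−1,−1)} ∪ {(a,0,−a,0) : a ∈ ℤ, a ∉ {−1,1}} ∪ {(0,a,0,−a) : a ∈ ℤ, a ∉ {−1,1}}. -/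
section Aux

lemma mProd_concat (l : List ℤ) (a : ℤ) : mProd (l ++ [a]) = mMat a * mProd l := by
  simp [mProd, List.map_append, List.reverse_append]

lemma growth (l : List ℤ) (hl : l ≠ []) (hx : ∀ x ∈ l, 2 ≤ |x|) :
    |mProd l 1 0| < |mProd l 0 0| ∧ |mProd l 1 1| < |mProd l 0 1| := by
  induction l using List.reverseRecOn with
  | nil => exact absurd rfl hl
  | append_singleton l a ih =>
    have ha : 2 ≤ |a| := hx a (by simp)
    rw [mProd_concat]
    rcases eq_or_ne l [] with rfl | hne
    · simp [mProd, mMat, Matrix.mul_apply, Fin.sum_univ_two]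
      linarith
    · obtain ⟨h1, h2⟩ := ih hne (fun x hx' => hx x (by simp [hx']))
      have e00 : (mMat a * mProd l) 0 0 = a * mProd l 0 0 - mProd l 1 0 := by
        simp [mMat, Matrix.mul_apply, Fin.sum_univ_two]; ring
      have e10 : (mMat a * mProd l) 1 0 = mProd l 0 0 := by
        simp [mMat, Matrix.mul_apply, Fin.sum_univ_two]
      have e01 : (mMat a * mProd l) 0 1 = a * mProd l 0 1 - mProd l 1 1 := by
        simp [mMat, Matrix.mul_apply, Fin.sum_univ_two]; ring
      have e11 : (mMat a * mProd l) 1 1 = mProd l 0 1 := by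
        simp [mMat, Matrix.mul_apply, Fin.sum_univ_two]
      rw [e00, e10, e01, e11]
      constructor
      · have k1 : |a * mProd l 0 0| - |mProd l 1 0| ≤ |a * mProd l 0 0 - mProd l 1 0| :=
          abs_sub_abs_le_abs_sub _ _
        rw [abs_mul] at k1
        nlinarith [abs_nonneg (mProd l 0 0), abs_nonneg (mProd l 1 0)]
      · have k1 : |a * mProd l 0 1| - |mProd l 1 1| ≤ |a * mProd l 0 1 - mProd l 1 1| :=
          abs_sub_abs_le_abs_sub _ _
        rw [abs_mul] at k1
        nlinarith [abs_nonneg (mProd l 0 1), abs_nonneg (mProd l 1 1)]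

lemma small_entry (c : List ℤ) (hc : c ≠ []) (hm : mProd c = 1 ∨ mProd c = -1) :
    ∃ x ∈ c, x = -1 ∨ x = 0 ∨ x = 1 := by
  by_contra h
  push_neg at h
  have hall : ∀ x ∈ c, 2 ≤ |x| := by
    intro x hx
    obtain ⟨h1, h2, h3⟩ := h x hx
    rcases abs_cases x with ⟨e, _⟩ | ⟨e, _⟩ <;> omega
  obtain ⟨g1, g2⟩ := growth c hc hall
  rcases hm with hm | hm <;> rw [hm] at g2 <;>
    simp [Matrix.one_apply, Matrix.neg_apply] at g2

lemma q3_id (a b c : ℤ) (h : mProd [a, b, c] = 1) : a = -1 ∧ b = -1 ∧ c = -1 := by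
  simp [mProd, mMat, List.prod_cons, Matrix.mul_fin_two, Matrix.one_fin_two] at h
  have h01 := h.1.2
  have h10 := h.2.1
  have h11 := h.2.2
  have hb : b = -1 := by linarith
  subst hb
  exact ⟨by linarith, rfl, by linarith⟩

lemma q3_neg (a b c : ℤ) (h : mProd [a, b, c] = -1) : a = 1 ∧ b = 1 ∧ c = 1 := by
  simp [mProd, mMat, List.prod_cons, Matrix.mul_fin_two, Matrix.one_fin_two] at h
  have h01 := h.1.2
  have h10 := h.2.1
  have h11 := h.2.2
  have hb : b = 1 := by linarith
  subst hb
  exact ⟨by linarith, rfl, by linarith⟩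

lemma q4_id (a b c d : ℤ) (h : mProd [a, b, c, d] = 1) :
    (b = 0 ∧ c = -a ∧ d = 0) ∨ (a = 0 ∧ c = 0 ∧ d = -b) := by
  simp [mProd, mMat, List.prod_cons, Matrix.mul_fin_two, Matrix.one_fin_two] at h
  have h00 := h.1.1
  have h01 := h.1.2
  have h10 := h.2.1
  have h11 := h.2.2
  rcases h11 with hc | hb
  · subst hc
    right
    have ha : a = 0 := by linarith
    subst ha
    exact ⟨rfl, rfl, by linarith⟩
  · subst hb
    left
    exact ⟨rfl, by linarith, by linarith⟩

lemma q4_neg (a b c d : ℤ) (h : mProd [a, b, c, d] = -1) :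
    c = a ∧ d = b ∧ a * b = 2 := by
  simp [mProd, mMat, List.prod_cons, Matrix.mul_fin_two, Matrix.one_fin_two] at h
  have h00 := h.1.1
  have h01 := h.1.2
  have h10 := h.2.1
  have h11 := h.2.2
  have hbc : b * c = 2 := by linear_combination -h11
  have hca : c = a := by linear_combination a * hbc - h10
  subst hca
  have hdb : d = b := by linear_combination -d * hbc - h01
  subst hdb
  refine ⟨rfl, rfl, ?_⟩
  linear_combination hbc

lemma mProd_q4 (a b : ℤ) (h : b = -a) : mProd [a, 0, b, 0] = 1 := by
  subst h
  simp [mProd, mMat, List.prod_cons, Matrix.mul_fin_two, Matrix.one_fin_two]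

lemma tupEquiv_length {c d : List ℤ} (h : TupEquiv c d) : d.length = c.length := by
  rcases h with ⟨k, rfl⟩ | ⟨k, rfl⟩ <;> simp

lemma tupEquiv_mem {c d : List ℤ} (h : TupEquiv c d) {x : ℤ} (hx : x ∈ d) : x ∈ c := by
  rcases h with ⟨k, rfl⟩ | ⟨k, rfl⟩ <;> simp_all

lemma oplus_length (a b : List ℤ) (ha : 3 ≤ a.length) (hb : 3 ≤ b.length) :
    (oplus a b).length = a.length + b.length - 2 := by
  simp [oplus]
  omega

lemma cons_app_dropLast (x y : ℤ) (t : List ℤ) : (x :: (t ++ [y])).dropLast = x :: t := by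
  rw [show x :: (t ++ [y]) = (x :: t) ++ [y] by simp, List.dropLast_concat]

lemma cons_app_getLast? (x y : ℤ) (t : List ℤ) : (x :: (t ++ [y])).getLast? = some y := by
  rw [show x :: (t ++ [y]) = (x :: t) ++ [y] by simp, List.getLast?_concat]

lemma oplus_form_pm (p z e : ℤ) (t : List ℤ) :
    oplus (((p - e) :: t) ++ [z - e]) [e, e, e] = (p :: (t ++ [z])) ++ [e] := by
  simp [oplus, cons_app_dropLast, cons_app_getLast?]

lemma oplus_form_zero (p z y : ℤ) (t : List ℤ) :
    oplus ((p :: t) ++ [z + y]) [-y, 0, y, 0] = (p :: (t ++ [z])) ++ [0, y] := by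
  simp [oplus, cons_app_dropLast, cons_app_getLast?]

lemma reduce_pm (c : List ℤ) (e : ℤ) (he : e = 1 ∨ e = -1) (hlen : 5 ≤ c.length)
    (hmem : e ∈ c) : IsReducible (Set.univ : Set ℤ) c := by
  obtain ⟨u, v, rfl⟩ := List.append_of_mem hmem
  have hw : 4 ≤ (v ++ u).length := by simp at hlen ⊢; omega
  obtain ⟨p, w', hw'⟩ := List.exists_cons_of_ne_nil (l := v ++ u)
    (by intro hh; rw [hh] at hw; simp at hw)
  rcases List.eq_nil_or_concat w' with rfl | ⟨t, z, rfl⟩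
  · rw [hw'] at hw; simp at hw
  have hwlen : (v ++ u).length = t.length + 2 := by rw [hw']; simp
  refine ⟨((p - e) :: t) ++ [z - e], [e, e, e], by simp; omega, by simp, by simp,
    ⟨by simp, by rcases he with rfl | rfl; exacts [Or.inr (by decide), Or.inl (by decide)]⟩,
    Or.inl ⟨u.length + 1, ?_⟩⟩
  have hrot : (u ++ e :: v).rotate (u.length + 1) = (v ++ u) ++ [e] := by
    rw [show u ++ e :: v = (u ++ [e]) ++ v by simp,
      List.rotate_eq_drop_append_take (by simp only [List.length_append, List.length_cons] at hlen ⊢; omega),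
      List.drop_left' (by simp), List.take_left' (by simp)]
    try simp
  rw [hrot, hw', oplus_form_pm]
  simp

lemma reduce_zero (c : List ℤ) (hlen : 5 ≤ c.length) (hmem : (0 : ℤ) ∈ c) :
    IsReducible (Set.univ : Set ℤ) c := by
  obtain ⟨u, v, rfl⟩ := List.append_of_mem hmem
  obtain ⟨w, y, k, hrot, hwl⟩ :
      ∃ (w : List ℤ) (y : ℤ) (k : ℕ), (u ++ 0 :: v).rotate k = w ++ [0, y] ∧ 3 ≤ w.length := by
    rcases v with _ | ⟨y, v'⟩
    · obtain ⟨y, u', rfl⟩ := List.exists_cons_of_ne_nil (l := u)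
        (by intro hh; rw [hh] at hlen; simp at hlen)
      refine ⟨u', y, 1, ?_, ?_⟩
      · rw [List.rotate_eq_drop_append_take (by simp)]
        simp
      · simp at hlen ⊢; omega
    · refine ⟨v' ++ u, y, u.length + 2, ?_, ?_⟩
      · rw [show u ++ 0 :: y :: v' = (u ++ [0, y]) ++ v' by simp,
          List.rotate_eq_drop_append_take (by simp only [List.length_append, List.length_cons] at hlen ⊢; omega),
          List.drop_left' (by simp), List.take_left' (by simp)]
        try simp
      · simp at hlen ⊢; omega
  obtain ⟨p, w', hw'⟩ := List.exists_cons_of_ne_nil (l := w)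
    (by intro hh; rw [hh] at hwl; simp at hwl)
  rcases List.eq_nil_or_concat w' with rfl | ⟨t, z, rfl⟩
  · rw [hw'] at hwl; simp at hwl
  have hwlen : w.length = t.length + 2 := by rw [hw']; simp
  refine ⟨(p :: t) ++ [z + y], [-y, 0, y, 0], by simp; omega, by simp, by simp,
    ⟨by simp, Or.inl (mProd_q4 (-y) y (by ring))⟩, Or.inl ⟨k, ?_⟩⟩
  rw [hrot, hw', oplus_form_zero]
  simp

end Aux
lemma mProd_q4' (a b : ℤ) (h : b = -a) : mProd [0, a, 0, b] = 1 := by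
  subst h
  simp [mProd, mMat, List.prod_cons, Matrix.mul_fin_two, Matrix.one_fin_two]
/-- The irreducible λ-quiddities over `ℤ` are exactly `(1,1,1)`, `(−1,−1,−1)`,
`(a,0,−a,0)` and `(0,a,0,−a)` for `a ∉ {−1,1}`. -/
theorem stmt6 (c : List ℤ) :
    IrreducibleQuiddity (Set.univ : Set ℤ) c ↔
      c = [1, 1, 1] ∨ c = [-1, -1, -1] ∨
      (∃ a : ℤ, a ≠ -1 ∧ a ≠ 1 ∧ c = [a, 0, -a, 0]) ∨
      (∃ a : ℤ, a ≠ -1 ∧ a ≠ 1 ∧ c = [0, a, 0, -a]) := by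
  constructor
  · rintro ⟨⟨hmem, hm⟩, hlen, hnred⟩
    rcases c with _ | ⟨x, c⟩; · simp at hlen
    rcases c with _ | ⟨y, c⟩; · simp at hlen
    rcases c with _ | ⟨z, c⟩; · simp at hlen
    rcases c with _ | ⟨w, c⟩
    · -- length 3
      rcases hm with hm | hm
      · obtain ⟨rfl, rfl, rfl⟩ := q3_id x y z hm
        exact Or.inr (Or.inl rfl)
      · obtain ⟨rfl, rfl, rfl⟩ := q3_neg x y z hm
        exact Or.inl rfl
    rcases c with _ | ⟨v, c⟩
    · -- length 4
      rcases hm with hm | hm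
      · rcases q4_id x y z w hm with ⟨rfl, rfl, rfl⟩ | ⟨rfl, rfl, rfl⟩
        · by_cases h1 : x = 1
          · subst h1
            exact absurd ⟨[-1, -1, -1], [1, 1, 1], by simp, by simp, by simp,
              ⟨by simp, Or.inr (by decide)⟩, Or.inl ⟨1, by decide⟩⟩ hnred
          by_cases h2 : x = -1
          · subst h2
            exact absurd ⟨[1, 1, 1], [-1, -1, -1], by simp, by simp, by simp,
              ⟨by simp, Or.inl (by decide)⟩, Or.inl ⟨1, by decide⟩⟩ hnred
          · exact Or.inr (Or.inr (Or.inl ⟨x, h2, h1, rfl⟩))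
        · by_cases h1 : y = 1
          · subst h1
            exact absurd ⟨[1, 1, 1], [-1, -1, -1], by simp, by simp, by simp,
              ⟨by simp, Or.inl (by decide)⟩, Or.inl ⟨0, by decide⟩⟩ hnred
          by_cases h2 : y = -1
          · subst h2
            exact absurd ⟨[-1, -1, -1], [1, 1, 1], by simp, by simp, by simp,
              ⟨by simp, Or.inr (by decide)⟩, Or.inl ⟨0, by decide⟩⟩ hnred
          · exact Or.inr (Or.inr (Or.inr ⟨y, h2, h1, rfl⟩))
      · obtain ⟨rfl, rfl, hxy⟩ := q4_neg x y z w hm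
        exfalso
        have hx : z = 1 ∨ z = -1 ∨ z = 2 ∨ z = -2 := by
          have d1 : z ∣ 2 := ⟨w, hxy.symm⟩
          have h2 := Int.le_of_dvd (by norm_num) d1
          have h3 := Int.le_of_dvd (by norm_num) ((neg_dvd).mpr d1)
          have h0 : z ≠ 0 := by rintro rfl; simp at hxy
          omega
        rcases hx with rfl | rfl | rfl | rfl
        · have hy : w = 2 := by linarith
          subst hy
          exact hnred ⟨[1, 1, 1], [1, 1, 1], by simp, by simp, by simp,
            ⟨by simp, Or.inr (by decide)⟩, Or.inl ⟨1, by decide⟩⟩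
        · have hy : w = -2 := by linarith
          subst hy
          exact hnred ⟨[-1, -1, -1], [-1, -1, -1], by simp, by simp, by simp,
            ⟨by simp, Or.inl (by decide)⟩, Or.inl ⟨1, by decide⟩⟩
        · have hy : w = 1 := by linarith
          subst hy
          exact hnred ⟨[1, 1, 1], [1, 1, 1], by simp, by simp, by simp,
            ⟨by simp, Or.inr (by decide)⟩, Or.inl ⟨0, by decide⟩⟩
        · have hy : w = -1 := by linarith
          subst hy
          exact hnred ⟨[-1, -1, -1], [-1, -1, -1], by simp, by simp, by simp,
            ⟨by simp, Or.inl (by decide)⟩, Or.inl ⟨0, by decide⟩⟩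
    · -- length ≥ 5
      exfalso
      obtain ⟨e, he, hsmall⟩ := small_entry _ (by simp) hm
      rcases hsmall with rfl | rfl | rfl
      · exact hnred (reduce_pm _ _ (Or.inr rfl) (by simp only [List.length_cons]; omega) he)
      · exact hnred (reduce_zero _ (by simp only [List.length_cons]; omega) he)
      · exact hnred (reduce_pm _ _ (Or.inl rfl) (by simp only [List.length_cons]; omega) he)
  · rintro (rfl | rfl | ⟨a, ha1, ha2, rfl⟩ | ⟨a, ha1, ha2, rfl⟩)
    · refine ⟨⟨by simp, Or.inr (by decide)⟩, by simp, ?_⟩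
      rintro ⟨u, v, hu, hv, _, _, hte⟩
      have hl := tupEquiv_length hte
      rw [oplus_length u v hu hv] at hl
      simp at hl
      omega
    · refine ⟨⟨by simp, Or.inl (by decide)⟩, by simp, ?_⟩
      rintro ⟨u, v, hu, hv, _, _, hte⟩
      have hl := tupEquiv_length hte
      rw [oplus_length u v hu hv] at hl
      simp at hl
      omega
    · refine ⟨⟨by simp, Or.inl (mProd_q4 a (-a) rfl)⟩, by simp, ?_⟩
      rintro ⟨u, v, hu, hv, _, ⟨_, hqm⟩, hte⟩
      have hl := tupEquiv_length hte
      rw [oplus_length u v hu hv] at hl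
      simp at hl
      obtain ⟨p, q, r, rfl⟩ := List.length_eq_three.mp (show v.length = 3 by omega)
      obtain ⟨s, t, e, rfl⟩ := List.length_eq_three.mp (show u.length = 3 by omega)
      rcases hqm with hq1 | hq1
      · obtain ⟨rfl, rfl, rfl⟩ := q3_id p q r hq1
        have hmem := tupEquiv_mem hte (x := -1) (by simp [oplus])
        simp at hmem
        omega
      · obtain ⟨rfl, rfl, rfl⟩ := q3_neg p q r hq1
        have hmem := tupEquiv_mem hte (x := 1) (by simp [oplus])
        simp at hmem
        omega
    · refine ⟨⟨by simp, Or.inl (mProd_q4' a (-a) rfl)⟩, by simp, ?_⟩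
      rintro ⟨u, v, hu, hv, _, ⟨_, hqm⟩, hte⟩
      have hl := tupEquiv_length hte
      rw [oplus_length u v hu hv] at hl
      simp at hl
      obtain ⟨p, q, r, rfl⟩ := List.length_eq_three.mp (show v.length = 3 by omega)
      obtain ⟨s, t, e, rfl⟩ := List.length_eq_three.mp (show u.length = 3 by omega)
      rcases hqm with hq1 | hq1
      · obtain ⟨rfl, rfl, rfl⟩ := q3_id p q r hq1
        have hmem := tupEquiv_mem hte (x := -1) (by simp [oplus])
        simp at hmem
        omega
      · obtain ⟨rfl, rfl, rfl⟩ := q3_neg p q r hq1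
        have hmem := tupEquiv_mem hte (x := 1) (by simp [oplus])
        simp at hmem
        omega
end

section
/- The set of irreducible λ-quiddities over ℕ* = {1,2,3,…} (viewed as a subset of ℤ) is exactly the set of constant tuples (1,1,…,1) of size 3n for n ∈ ℕ*. -/

abbrev Mat2 := Matrix (Fin 2) (Fin 2) ℤ

namespace Stmt8Aux

lemma mProd_nil : mProd ([] : List ℤ) = 1 := rfl

lemma mProd_singleton (a : ℤ) : mProd [a] = mMat a := by
  simp [mProd]

lemma mProd_append (u v : List ℤ) : mProd (u ++ v) = mProd v * mProd u := by
  simp [mProd, List.reverse_append]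

lemma mProd_cons (a : ℤ) (l : List ℤ) : mProd (a :: l) = mProd l * mMat a := by
  have : (a :: l) = [a] ++ l := rfl
  rw [this, mProd_append, mProd_singleton]

lemma mProd_replicate_one (r : ℕ) : mProd (List.replicate r (1:ℤ)) = (mMat 1) ^ r := by
  induction r with
  | zero => simp [mProd_nil]
  | succ n ih =>
      rw [List.replicate_succ, mProd_cons, ih, pow_succ]

lemma mMat_one_cube : (mMat (1:ℤ)) ^ 3 = -1 := by
  have h : (mMat (1:ℤ)) = !![1,-1;1,0] := rfl
  rw [pow_succ, pow_succ, pow_one, h]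
  rw [Matrix.mul_fin_two, Matrix.mul_fin_two]
  norm_num
  ext i j
  fin_cases i <;> fin_cases j <;>
    simp [Matrix.one_fin_two]

/-- `P = Q` or `P = -Q`. -/
def PM (P Q : Mat2) : Prop := P = Q ∨ P = -Q

lemma PM.refl (P : Mat2) : PM P P := Or.inl rfl

lemma PM.mul_left (M : Mat2) {P Q : Mat2} (h : PM P Q) : PM (M * P) (M * Q) := by
  rcases h with h | h <;> rw [h] <;> [exact Or.inl rfl; exact Or.inr (by rw [mul_neg])]

lemma PM.mul_right (M : Mat2) {P Q : Mat2} (h : PM P Q) : PM (P * M) (Q * M) := by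
  rcases h with h | h <;> rw [h] <;> [exact Or.inl rfl; exact Or.inr (by rw [neg_mul])]

lemma PM.trans {P Q R : Mat2} (h1 : PM P Q) (h2 : PM Q R) : PM P R := by
  rcases h1 with h1 | h1 <;> rcases h2 with h2 | h2 <;> simp [PM, h1, h2]

lemma pm_pow_mod3 (r : ℕ) : PM ((mMat (1:ℤ)) ^ r) ((mMat 1) ^ (r % 3)) := by
  induction r using Nat.strong_induction_on with
  | _ r ih =>
    rcases Nat.lt_or_ge r 3 with h | h
    · rw [Nat.mod_eq_of_lt h]; exact PM.refl _
    · obtain ⟨s, rfl⟩ : ∃ s, r = s + 3 := ⟨r - 3, by omega⟩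
      have h1 : (mMat (1:ℤ)) ^ (s + 3) = -((mMat 1) ^ s) := by
        rw [pow_add, mMat_one_cube, mul_neg, mul_one]
      have h2 : (s + 3) % 3 = s % 3 := by omega
      rw [h1, h2]
      have := ih s (by omega)
      rcases this with h | h
      · exact Or.inr (by rw [h])
      · exact Or.inl (by rw [h, neg_neg])


/-- cone invariant on a column `(p, q)` -/
def Good (p q : ℤ) : Prop := (1 ≤ q ∧ q < p) ∨ (1 ≤ p ∧ q ≤ -1)

def GoodM (P : Mat2) : Prop := Good (P 0 0) (P 1 0) ∨ Good (-(P 0 0)) (-(P 1 0))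

lemma GoodM.neg {P : Mat2} (h : GoodM P) : GoodM (-P) := by
  rcases h with h | h
  · exact Or.inr (by simpa using h)
  · exact Or.inl (by simpa using h)

lemma goodM_pm {P Q : Mat2} (h : GoodM Q) (hpm : PM P Q) : GoodM P := by
  rcases hpm with rfl | rfl
  · exact h
  · exact h.neg

lemma good_ne_pm_one (p : ℤ) : ¬ Good p 0 := by
  rintro (⟨h1, _⟩ | ⟨_, h2⟩) <;> omega

lemma stepA {x p q : ℤ} (hx : 2 ≤ x) (h : Good p q) : Good (x * p - q) p := by
  rcases h with ⟨h1, h2⟩ | ⟨h1, h2⟩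
  · left; constructor
    · omega
    · nlinarith
  · left; constructor
    · omega
    · nlinarith

lemma stepN {x p q : ℤ} (hx : 2 ≤ x) (h : Good p q) : Good p (q - (x - 1) * p) := by
  rcases h with ⟨h1, h2⟩ | ⟨h1, h2⟩
  · right; exact ⟨by omega, by nlinarith⟩
  · right; exact ⟨h1, by nlinarith⟩

/-- the matrix of a block with `r % 3 = 2`. -/
def nMat (x : ℤ) : Mat2 := !![-1, 0; x - 1, -1]

lemma mul_entries (M P : Mat2) :
    (M * P) 0 0 = M 0 0 * P 0 0 + M 0 1 * P 1 0 ∧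
    (M * P) 1 0 = M 1 0 * P 0 0 + M 1 1 * P 1 0 := by
  constructor <;> rw [Matrix.mul_apply, Fin.sum_univ_two]

lemma goodM_mul_mMat {x : ℤ} (hx : 2 ≤ x) {P : Mat2} (h : GoodM P) : GoodM (mMat x * P) := by
  obtain ⟨e1, e2⟩ := mul_entries (mMat x) P
  have m00 : mMat x 0 0 = x := rfl
  have m01 : mMat x 0 1 = -1 := rfl
  have m10 : mMat x 1 0 = 1 := rfl
  have m11 : mMat x 1 1 = 0 := rfl
  rw [m00, m01] at e1; rw [m10, m11] at e2
  set p := P 0 0; set q := P 1 0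
  have eq1 : x * p + -1 * q = x * p - q := by ring
  have eq2 : 1 * p + 0 * q = p := by ring
  rcases h with h | h
  · left; rw [e1, e2, eq1, eq2]; exact stepA hx h
  · right; rw [e1, e2, eq1, eq2]
    have := stepA hx h
    have eq3 : x * -p - -q = -(x * p - q) := by ring
    rw [eq3] at this; exact this

lemma goodM_mul_nMat {x : ℤ} (hx : 2 ≤ x) {P : Mat2} (h : GoodM P) : GoodM (nMat x * P) := by
  obtain ⟨e1, e2⟩ := mul_entries (nMat x) P
  have m00 : nMat x 0 0 = -1 := rfl
  have m01 : nMat x 0 1 = 0 := rfl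
  have m10 : nMat x 1 0 = x - 1 := rfl
  have m11 : nMat x 1 1 = -1 := rfl
  rw [m00, m01] at e1; rw [m10, m11] at e2
  set p := P 0 0; set q := P 1 0
  have eq1 : -1 * p + 0 * q = -p := by ring
  have eq2 : (x - 1) * p + -1 * q = -(q - (x-1) * p) := by ring
  rcases h with h | h
  · right; rw [e1, e2, eq1, eq2, neg_neg, neg_neg]; exact stepN hx h
  · left; rw [e1, e2, eq1, eq2]
    have := stepN hx h
    have eq3 : -q - (x - 1) * -p = -(q - (x-1)*p) := by ring
    rw [eq3] at this; exact this

lemma goodM_mMat {x : ℤ} (hx : 2 ≤ x) : GoodM (mMat x) := by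
  left
  have h0 : mMat x 0 0 = x := rfl
  have h1 : mMat x 1 0 = 1 := rfl
  rw [h0, h1]; left; omega

lemma goodM_nMat {x : ℤ} (hx : 2 ≤ x) : GoodM (nMat x) := by
  right
  have h0 : nMat x 0 0 = -1 := rfl
  have h1 : nMat x 1 0 = x - 1 := rfl
  rw [h0, h1]; right; omega

lemma not_goodM_one : ¬ GoodM (1 : Mat2) := by
  have h0 : (1 : Mat2) 0 0 = 1 := rfl
  have h1 : (1 : Mat2) 1 0 = 0 := rfl
  rintro (h | h) <;> rw [h0, h1] at h
  · exact good_ne_pm_one _ h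
  · exact good_ne_pm_one _ (by simpa using h)

lemma not_goodM_neg_one : ¬ GoodM (-1 : Mat2) := by
  intro h
  exact not_goodM_one (by simpa using h.neg)


/-- flatten a list of blocks `(x, r) ↦ x :: 1^r` -/
def bflat : List (ℤ × ℕ) → List ℤ
  | [] => []
  | p :: bs => p.1 :: (List.replicate p.2 1 ++ bflat bs)

lemma bflat_append (u v : List (ℤ × ℕ)) : bflat (u ++ v) = bflat u ++ bflat v := by
  induction u with
  | nil => rfl
  | cons p u ih => simp [bflat, ih]

lemma bflat_cons (p : ℤ × ℕ) (bs : List (ℤ × ℕ)) :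
    bflat (p :: bs) = p.1 :: (List.replicate p.2 1 ++ bflat bs) := rfl

lemma bflat_eq_nil {bs : List (ℤ × ℕ)} (h : bflat bs = []) : bs = [] := by
  cases bs with
  | nil => rfl
  | cons p bs => simp [bflat] at h

lemma mem_bflat_pos {bs : List (ℤ × ℕ)} (hb : ∀ b ∈ bs, 2 ≤ b.1) :
    ∀ z ∈ bflat bs, 0 < z := by
  induction bs with
  | nil => simp [bflat]
  | cons p bs ih =>
      intro z hz
      rw [bflat_cons] at hz
      rcases List.mem_cons.1 hz with rfl | hz
      · have := hb p List.mem_cons_self; omega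
      · rcases List.mem_append.1 hz with hz | hz
        · rw [List.eq_of_mem_replicate hz]; omega
        · exact ih (fun b h => hb b (List.mem_cons_of_mem _ h)) z hz

/-- product of a single block -/
lemma mProd_block (x : ℤ) (r : ℕ) :
    mProd (x :: List.replicate r 1) = (mMat 1) ^ r * mMat x := by
  rw [mProd_cons, mProd_replicate_one]

lemma nMat_eq (x : ℤ) : (mMat (1:ℤ)) ^ 2 * mMat x = nMat x := by
  have h2 : (mMat (1:ℤ)) ^ 2 = !![0,-1;1,-1] := by
    rw [pow_two]
    show (!![1,-1;1,0] : Mat2) * !![1,-1;1,0] = _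
    rw [Matrix.mul_fin_two]; norm_num
  rw [h2]
  show (!![0,-1;1,-1] : Mat2) * !![x,-1;1,0] = _
  rw [Matrix.mul_fin_two]
  unfold nMat
  norm_num
  ring_nf

/-- block with `r % 3 ≠ 1` times a Good matrix (or 1) is Good -/
lemma goodM_block_mul {x : ℤ} {r : ℕ} (hx : 2 ≤ x) (hr : r % 3 ≠ 1) {P : Mat2}
    (h : P = 1 ∨ GoodM P) : GoodM (mProd (x :: List.replicate r 1) * P) := by
  have key : PM (mProd (x :: List.replicate r 1) * P) ((mMat 1) ^ (r % 3) * mMat x * P) := by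
    rw [mProd_block]
    exact PM.mul_right P (PM.mul_right (mMat x) (pm_pow_mod3 r))
  apply goodM_pm _ key
  have hGood : ∀ Q : Mat2, GoodM Q → GoodM ((mMat 1) ^ (r % 3) * mMat x * Q) := by
    intro Q hQ
    have h3 : r % 3 = 0 ∨ r % 3 = 2 := by omega
    rcases h3 with h3 | h3 <;> rw [h3]
    · simpa [pow_zero, one_mul, mul_assoc] using goodM_mul_mMat hx hQ
    · rw [mul_assoc, ← mul_assoc ((mMat 1)^2), nMat_eq]
      exact goodM_mul_nMat hx hQ
  rcases h with rfl | h
  · rw [mul_one]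
    have h3 : r % 3 = 0 ∨ r % 3 = 2 := by omega
    rcases h3 with h3 | h3 <;> rw [h3]
    · simpa using goodM_mMat hx
    · rw [nMat_eq]; exact goodM_nMat hx
  · exact hGood P h

/-- KEY: the product over a nonempty block list with no run ≡ 1 mod 3 is Good -/
lemma goodM_bflat (bs : List (ℤ × ℕ)) (hne : bs ≠ [])
    (hb : ∀ b ∈ bs, 2 ≤ b.1) (hr : ∀ b ∈ bs, b.2 % 3 ≠ 1) :
    GoodM (mProd (bflat bs)) := by
  have main : ∀ bs : List (ℤ × ℕ), (∀ b ∈ bs, 2 ≤ b.1) → (∀ b ∈ bs, b.2 % 3 ≠ 1) →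
      bs = [] ∨ GoodM (mProd (bflat bs)) := by
    intro bs
    induction bs using List.reverseRecOn with
    | nil => intro _ _; exact Or.inl rfl
    | append_singleton as b ih =>
        intro hb hr
        right
        rw [bflat_append, mProd_append]
        have hblock : bflat [b] = b.1 :: List.replicate b.2 1 := by
          simp [bflat]
        rw [hblock]
        have hb1 : 2 ≤ b.1 := hb b (by simp)
        have hr1 : b.2 % 3 ≠ 1 := hr b (by simp)
        apply goodM_block_mul hb1 hr1
        rcases ih (fun x hx => hb x (by simp [hx])) (fun x hx => hr x (by simp [hx])) with h | h
        · left; rw [h]; exact mProd_nil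
        · right; exact h
  rcases main bs hb hr with h | h
  · exact absurd h hne
  · exact h


/-- inverse of mMat -/
def mInv (a : ℤ) : Mat2 := !![0, 1; -1, a]

lemma mMat_mul_mInv (a : ℤ) : mMat a * mInv a = 1 := by
  show (!![a,-1;1,0] : Mat2) * !![0,1;-1,a] = 1
  rw [Matrix.mul_fin_two, Matrix.one_fin_two]
  norm_num

/-- quiddity matrix condition -/
def QM (l : List ℤ) : Prop := mProd l = 1 ∨ mProd l = -1

lemma qm_rotate_one {l : List ℤ} (h : QM l) : QM (l.rotate 1) := by
  cases l with
  | nil => simpa using h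
  | cons a t =>
      have hrot : (a :: t).rotate 1 = t ++ [a] := by
        have := List.rotate_cons_succ t a 0
        simpa using this
      rw [hrot]
      have hmp : mProd (t ++ [a]) = mMat a * mProd t := by
        rw [mProd_append, mProd_singleton]
      have hc : mProd (a :: t) = mProd t * mMat a := mProd_cons a t
      unfold QM at h ⊢
      rw [hmp]
      rcases h with h | h
      · rw [hc] at h
        have ht : mProd t = mInv a := by
          have := congrArg (· * mInv a) h
          simpa [mul_assoc, mMat_mul_mInv, one_mul] using this
        left; rw [ht, mMat_mul_mInv]
      · rw [hc] at h
        have ht : mProd t = -mInv a := by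
          have := congrArg (· * mInv a) h
          simpa [mul_assoc, mMat_mul_mInv, neg_mul, one_mul] using this
        right; rw [ht, mul_neg, mMat_mul_mInv]

lemma qm_rotate {l : List ℤ} (h : QM l) (k : ℕ) : QM (l.rotate k) := by
  induction k with
  | zero => simpa using h
  | succ n ih =>
      have : l.rotate (n + 1) = (l.rotate n).rotate 1 := by
        rw [List.rotate_rotate]
  -- (l.rotate n).rotate 1 = l.rotate (n+1)
      rw [this]
      exact qm_rotate_one ih

/-- split leading ones -/
lemma split_ones (t : List ℤ) (hpos : ∀ z ∈ t, 0 < z) :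
    ∃ r t', t = List.replicate r 1 ++ t' ∧ (t' = [] ∨ ∃ x s, t' = x :: s ∧ 2 ≤ x) := by
  induction t with
  | nil => exact ⟨0, [], by simp⟩
  | cons z t ih =>
      have hz : 0 < z := hpos z (by simp)
      rcases eq_or_ne z 1 with rfl | hz1
      · obtain ⟨r, t', ht, halt⟩ := ih (fun w hw => hpos w (by simp [hw]))
        exact ⟨r + 1, t', by simp [List.replicate_succ, ht], halt⟩
      · exact ⟨0, z :: t, by simp, Or.inr ⟨z, t, rfl, by omega⟩⟩

/-- block decomposition of a positive list starting with an entry ≥ 2 -/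
lemma decomp : ∀ n (c : List ℤ), c.length ≤ n → (∀ z ∈ c, 0 < z) →
    (c = [] ∨ ∃ x s, c = x :: s ∧ 2 ≤ x) →
    ∃ bs : List (ℤ × ℕ), bflat bs = c ∧ ∀ b ∈ bs, 2 ≤ b.1 := by
  intro n
  induction n with
  | zero =>
      intro c hlen _ _
      have : c = [] := List.eq_nil_of_length_eq_zero (by omega)
      exact ⟨[], by simp [this, bflat], by simp⟩
  | succ n ih =>
      intro c hlen hpos halt
      rcases halt with rfl | ⟨x, s, rfl, hx⟩
      · exact ⟨[], by simp [bflat], by simp⟩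
      · obtain ⟨r, t', ht, halt'⟩ := split_ones s (fun z hz => hpos z (by simp [hz]))
        have hlt : t'.length ≤ n := by
          have h1 : s.length = r + t'.length := by
            rw [ht]; simp
          have h2 : (x :: s).length = s.length + 1 := by simp
          omega
        obtain ⟨bs, hbs, hhead⟩ := ih t' hlt
          (fun z hz => hpos z (by simp [ht, hz]))
          (by
            rcases halt' with h | ⟨y, u, hy, hy2⟩
            · exact Or.inl h
            · exact Or.inr ⟨y, u, hy, hy2⟩)
        refine ⟨(x, r) :: bs, ?_, ?_⟩
        · show (x, r).1 :: (List.replicate (x, r).2 1 ++ bflat bs) = x :: s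
          simp [hbs, ht]
        · intro b hb
          rcases List.mem_cons.1 hb with rfl | hb
          · exact hx
          · exact hhead b hb

/-- rotate to bring a member to the front -/
lemma rotate_to_front {c : List ℤ} {x : ℤ} (hx : x ∈ c) :
    ∃ k s, c.rotate k = x :: s := by
  obtain ⟨u, v, rfl⟩ := List.append_of_mem hx
  refine ⟨u.length, v ++ u, ?_⟩
  rw [List.rotate_eq_drop_append_take (by simp)]
  rw [List.drop_left, List.take_left]
  simp


lemma fin2_ext (a b c d e f g h : ℤ) (h1 : a = e) (h2 : b = f) (h3 : c = g) (h4 : d = h) :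
    !![a,b;c,d] = (!![e,f;g,h] : Mat2) := by rw [h1,h2,h3,h4]

lemma qm_entry {l : List ℤ} {Q : Mat2} (h : QM l) (hp : PM (mProd l) Q) : Q 1 0 = 0 := by
  have h10 : (1 : Mat2) 1 0 = 0 := rfl
  have hn10 : (-1 : Mat2) 1 0 = 0 := by
    rw [Matrix.neg_apply, h10, neg_zero]
  have key : Q = 1 ∨ Q = -1 := by
    rcases h with h | h <;> rcases hp with hp | hp
    · left; rw [← hp]; exact h
    · right
      have h2 : -Q = 1 := by rw [← hp]; exact h
      have := congrArg Neg.neg h2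
      simpa using this
    · right; rw [← hp]; exact h
    · left
      have h2 : -Q = -1 := by rw [← hp]; exact h
      have := congrArg Neg.neg h2
      simpa using this
  rcases key with rfl | rfl
  · exact h10
  · exact hn10

lemma pm_block_one (x : ℤ) {r : ℕ} (hr : r % 3 = 1) :
    PM (mProd (x :: List.replicate r 1)) (mMat 1 * mMat x) := by
  rw [mProd_cons, mProd_replicate_one]
  have := pm_pow_mod3 r
  rw [hr, pow_one] at this
  have h := PM.mul_right (Q := mMat 1) (mMat x) this
  -- this has type PM ((mMat 1)^r) (mMat 1); mul_right gives PM ((mMat1)^r * mMat x) (mMat 1 * mMat x)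
  -- but mProd_cons gives mProd (replicate r 1) * mMat x ... matches after rw
  exact h

lemma m1x_entries (x : ℤ) : mMat (1:ℤ) * mMat x = !![x - 1, -1; x, -1] := by
  show (!![1,-1;1,0] : Mat2) * !![x,-1;1,0] = _
  rw [Matrix.mul_fin_two]; apply fin2_ext <;> ring

/-- single block with r ≡ 1 is not a quiddity -/
lemma not_qm_single {x : ℤ} (hx : 2 ≤ x) {r : ℕ} (hr : r % 3 = 1) :
    ¬ QM (x :: List.replicate r 1) := by
  intro h
  have := qm_entry h (pm_block_one x hr)
  rw [m1x_entries] at this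
  have : x = 0 := by simpa using this
  omega

/-- (w, x, 1^r) with r ≡ 1 is not a quiddity -/
lemma not_qm_two_a {x w : ℤ} (hx : 2 ≤ x) (hw : 2 ≤ w) {r : ℕ} (hr : r % 3 = 1) :
    ¬ QM (w :: x :: List.replicate r 1) := by
  intro h
  have hpm : PM (mProd (w :: x :: List.replicate r 1)) (mMat 1 * mMat x * mMat w) := by
    rw [mProd_cons]
    exact PM.mul_right (mMat w) (pm_block_one x hr)
  have := qm_entry h hpm
  rw [m1x_entries] at this
  have he : (!![x - 1, -1; x, -1] : Mat2) * mMat w = !![(x-1)*w + -1, -(x-1); x*w + -1, -x] := by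
    show _ * (!![w,-1;1,0] : Mat2) = _
    rw [Matrix.mul_fin_two]; apply fin2_ext <;> ring
  rw [he] at this
  have : x * w + -1 = 0 := by simpa using this
  nlinarith

/-- (x, 1^r, w) with r ≡ 1 is not a quiddity -/
lemma not_qm_two_b {x w : ℤ} (hx : 2 ≤ x) (hw : 2 ≤ w) {r : ℕ} (hr : r % 3 = 1) :
    ¬ QM ((x :: List.replicate r 1) ++ [w]) := by
  intro h
  have hpm : PM (mProd ((x :: List.replicate r 1) ++ [w])) (mMat w * (mMat 1 * mMat x)) := by
    rw [mProd_append, mProd_singleton]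
    exact PM.mul_left (mMat w) (pm_block_one x hr)
  have := qm_entry h hpm
  rw [m1x_entries] at this
  have he : mMat w * (!![x - 1, -1; x, -1] : Mat2) = !![w*(x-1) + -x, -w + 1; x - 1, -1] := by
    show (!![w,-1;1,0] : Mat2) * _ = _
    rw [Matrix.mul_fin_two]; apply fin2_ext <;> ring
  rw [he] at this
  have : x - 1 = 0 := by simpa using this
  omega

/-- replicate of 1s with length not ≡ 0 mod 3 is not a quiddity -/
lemma not_qm_replicate {n : ℕ} (hn : n % 3 ≠ 0) : ¬ QM (List.replicate n (1:ℤ)) := by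
  intro h
  have hpm : PM (mProd (List.replicate n (1:ℤ))) ((mMat 1) ^ (n % 3)) := by
    rw [mProd_replicate_one]; exact pm_pow_mod3 n
  have := qm_entry h hpm
  have h3 : n % 3 = 1 ∨ n % 3 = 2 := by omega
  rcases h3 with h3 | h3 <;> rw [h3] at this
  · rw [pow_one] at this
    have : (1 : ℤ) = 0 := by simpa [mMat] using this
    omega
  · have h2 : (mMat (1:ℤ)) ^ 2 = !![0,-1;1,-1] := by
      rw [pow_two]
      show (!![1,-1;1,0] : Mat2) * !![1,-1;1,0] = _
      rw [Matrix.mul_fin_two]; norm_num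
    rw [h2] at this
    have : (1 : ℤ) = 0 := by simpa using this
    omega

/-- computation of oplus for our reduction -/
lemma oplus_eval (w x : ℤ) (e' : List ℤ) (r : ℕ) :
    oplus ((w - 1) :: (e' ++ [x - 1])) (List.replicate (r + 2) (1:ℤ))
      = w :: (e' ++ x :: List.replicate r 1) := by
  have hb : List.replicate (r + 2) (1:ℤ) = List.replicate (r + 1) (1:ℤ) ++ [1] :=
    List.replicate_succ'
  have hbl : (List.replicate (r + 2) (1:ℤ)).getLastD 0 = 1 := by
    rw [hb]; exact List.getLastD_concat
  have hbh : (List.replicate (r + 2) (1:ℤ)).headD 0 = 1 := by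
    rw [List.replicate_succ]; rfl
  have hbd : (List.replicate (r + 2) (1:ℤ)).dropLast = List.replicate (r + 1) (1:ℤ) := by
    rw [hb]; exact List.dropLast_concat
  have hbt : (List.replicate (r + 1) (1:ℤ)).tail = List.replicate r (1:ℤ) := by
    rw [List.replicate_succ]; rfl
  have had : ((w - 1) :: (e' ++ [x - 1])).dropLast = (w - 1) :: e' := by
    have : (w - 1) :: (e' ++ [x - 1]) = ((w - 1) :: e') ++ [x - 1] := by simp
    rw [this]; exact List.dropLast_concat
  have hal : ((w - 1) :: (e' ++ [x - 1])).getLastD 0 = x - 1 := by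
    have : (w - 1) :: (e' ++ [x - 1]) = ((w - 1) :: e') ++ [x - 1] := by simp
    rw [this]; exact List.getLastD_concat
  unfold oplus
  rw [hbl, hbh, hbd, hbt, had, hal]
  have e1 : w - 1 + 1 = w := by ring
  have e2 : x - 1 + 1 = x := by ring
  rw [List.headD_cons, e1, e2, List.tail_cons]

/-- replicate (r+2) ones is a quiddity when r % 3 = 1 -/
lemma qm_replicate_of_mod {m : ℕ} (hm : m % 3 = 0) : QM (List.replicate m (1:ℤ)) := by
  have h := pm_pow_mod3 m
  rw [hm, pow_zero] at h
  unfold QM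
  rw [mProd_replicate_one]
  exact h

theorem forward {c : List ℤ} (h : IrreducibleQuiddity {x : ℤ | 0 < x} c) :
    ∃ n : ℕ, 0 < n ∧ c = List.replicate (3 * n) (1 : ℤ) := by
  obtain ⟨⟨hmem, hqm⟩, hlen, hnred⟩ := h
  have hpos : ∀ z ∈ c, 0 < z := fun z hz => hmem z hz
  by_cases hall : ∀ z ∈ c, z = (1:ℤ)
  · -- all ones
    have hc : c = List.replicate c.length 1 := by
      apply List.eq_replicate_length.2 hall
    have hq : QM c := hqm
    rw [hc] at hq
    have h3 : c.length % 3 = 0 := by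
      by_contra h3
      exact not_qm_replicate h3 hq
    obtain ⟨m, hm⟩ : ∃ m, c.length = 3 * m := ⟨c.length / 3, by omega⟩
    refine ⟨m, by omega, ?_⟩
    rw [← hm]
    exact hc
  · -- there is an entry ≥ 2
    exfalso
    push_neg at hall
    obtain ⟨z, hzc, hz1⟩ := hall
    have hz2 : 2 ≤ z := by have := hpos z hzc; omega
    obtain ⟨k, s, hrot⟩ := rotate_to_front hzc
    set c' : List ℤ := c.rotate k with hc'def
    have hq' : QM c' := qm_rotate hqm k
    have hpos' : ∀ y ∈ c', 0 < y := by
      intro y hy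
      exact hpos y ((List.mem_rotate).1 hy)
    have hlen' : c'.length = c.length := by simp [hc'def]
    obtain ⟨bs, hbs, hheads⟩ := decomp c'.length c' le_rfl hpos'
      (Or.inr ⟨z, s, hrot, hz2⟩)
    have hbne : bs ≠ [] := by
      intro hnil
      rw [hnil] at hbs
      have : c' = [] := by rw [← hbs]; rfl
      rw [this] at hlen'
      simp at hlen'
      omega
    have hex : ∃ b ∈ bs, b.2 % 3 = 1 := by
      by_contra hno
      push_neg at hno
      have hg := goodM_bflat bs hbne hheads hno
      rw [hbs] at hg
      rcases hq' with h | h <;> rw [h] at hg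
      · exact not_goodM_one hg
      · exact not_goodM_neg_one hg
    obtain ⟨⟨x, r⟩, hbmem, hr1⟩ := hex
    have hx2 : 2 ≤ x := hheads _ hbmem
    obtain ⟨bs₁, bs₂, hsplit⟩ := List.append_of_mem hbmem
    have hmem_of : ∀ b ∈ bs₂ ++ bs₁, b ∈ bs := by
      intro b hb
      rw [hsplit]
      rcases List.mem_append.1 hb with h | h
      · exact List.mem_append.2 (Or.inr (List.mem_cons_of_mem _ h))
      · exact List.mem_append.2 (Or.inl h)
    cases hcase : bs₂ ++ bs₁ with
    | nil =>
        obtain ⟨h2, h1⟩ := List.append_eq_nil_iff.1 hcase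
        rw [h1, h2] at hsplit
        rw [hsplit] at hbs
        have : c' = x :: List.replicate r 1 := by
          rw [← hbs]
          show (x, r).1 :: (List.replicate (x, r).2 1 ++ bflat []) = _
          simp [bflat]
        rw [this] at hq'
        exact not_qm_single hx2 hr1 hq'
    | cons p rest =>
        obtain ⟨w, r₂⟩ := p
        have hw2 : 2 ≤ w := hheads _ (hmem_of (w, r₂) (by rw [hcase]; exact List.mem_cons_self))
        by_cases hdeg : r₂ = 0 ∧ rest = []
        · -- degenerate: the only other block is (w, 0)
          obtain ⟨hr₂, hrest⟩ := hdeg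
          subst hr₂ hrest
          -- bs₂ ++ bs₁ = [(w,0)]
          rcases bs₂ with _ | ⟨q, bs₂'⟩
          · -- bs₁ = [(w,0)], bs = [(w,0),(x,r)]
            simp at hcase
            rw [hcase] at hsplit
            rw [hsplit] at hbs
            have : c' = w :: x :: List.replicate r 1 := by
              rw [← hbs]
              show bflat ([(w,0)] ++ [(x,r)]) = _
              simp [bflat]
            rw [this] at hq'
            exact not_qm_two_a hx2 hw2 hr1 hq'
          · -- bs₂ = [(w,0)], bs₁ = []
            have hq' := hq'
            obtain ⟨hq1, hq2, hq3⟩ : q = (w, 0) ∧ bs₂' = [] ∧ bs₁ = [] := by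
              have h := hcase
              simp at h
              tauto
            subst hq1
            rw [hq3, hq2] at hsplit
            rw [hsplit] at hbs
            have hc'eq : c' = (x :: List.replicate r 1) ++ [w] := by
              rw [← hbs]
              show bflat ([(x,r)] ++ [(w,0)]) = _
              simp [bflat]
            rw [hc'eq] at hq'
            exact not_qm_two_b hx2 hw2 hr1 hq'
        · -- main case: construct a reduction
          set e' : List ℤ := List.replicate r₂ 1 ++ bflat rest with he'def
          have he'ne : e' ≠ [] := by
            intro hnil
            rw [he'def] at hnil
            have h1 := List.append_eq_nil_iff.1 hnil
            have hr₂0 : r₂ = 0 := by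
              have := h1.1
              simpa using this
            have : rest = [] := bflat_eq_nil h1.2
            exact hdeg ⟨hr₂0, this⟩
          have heflat : bflat (bs₂ ++ bs₁) = w :: e' := by
            rw [hcase]
            rfl
          set u : List ℤ := bflat bs₁ ++ (x :: List.replicate r 1) with hudef
          set v : List ℤ := bflat bs₂ with hvdef
          have hc'uv : c' = u ++ v := by
            rw [← hbs, hsplit, bflat_append]
            show bflat bs₁ ++ ((x,r).1 :: (List.replicate (x,r).2 1 ++ bflat bs₂)) = _
            simp [hudef, hvdef]
          have hfeq : v ++ u = w :: (e' ++ x :: List.replicate r 1) := by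
            rw [hudef, hvdef, ← List.append_assoc, ← bflat_append, heflat]
            simp
          set a : List ℤ := (w - 1) :: (e' ++ [x - 1]) with hadef
          set b : List ℤ := List.replicate (r + 2) 1 with hbdef
          have hoplus : oplus a b = v ++ u := by
            rw [hadef, hbdef, oplus_eval, hfeq]
          have hr_ge : 1 ≤ r := by omega
          apply hnred
          refine ⟨a, b, ?_, ?_, ?_, ?_, ?_⟩
          · -- 3 ≤ a.length
            have : 1 ≤ e'.length := List.length_pos_iff.2 he'ne
            simp [hadef]
            omega
          · simp [hbdef]
            omega
          · -- entries of a positive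
            intro y hy
            rw [hadef] at hy
            rcases List.mem_cons.1 hy with rfl | hy
            · show (0:ℤ) < w - 1; omega
            · rcases List.mem_append.1 hy with hy | hy
              · have : y ∈ bflat (bs₂ ++ bs₁) := by
                  rw [heflat]
                  exact List.mem_cons_of_mem _ hy
                exact mem_bflat_pos (fun b hb => hheads b (hmem_of b hb)) y this
              · have : y = x - 1 := by simpa using hy
                subst this
                show (0:ℤ) < x - 1; omega
          · -- b is a quiddity
            constructor
            · intro y hy
              rw [hbdef] at hy
              have := List.eq_of_mem_replicate hy
              subst this
              show (0:ℤ) < 1; omega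
            · have : (r + 2) % 3 = 0 := by omega
              exact qm_replicate_of_mod this
          · -- TupEquiv
            left
            refine ⟨k + u.length, ?_⟩
            have hrot2 : c.rotate (k + u.length) = (c.rotate k).rotate u.length := by
              rw [List.rotate_rotate]
            rw [hrot2, ← hc'def, hc'uv]
            rw [List.rotate_eq_drop_append_take (by simp)]
            rw [List.drop_left, List.take_left]
            exact hoplus

theorem backward {c : List ℤ} (h : ∃ n : ℕ, 0 < n ∧ c = List.replicate (3 * n) (1 : ℤ)) :
    IrreducibleQuiddity {x : ℤ | 0 < x} c := by
  obtain ⟨n, hn, rfl⟩ := h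
  refine ⟨⟨?_, ?_⟩, ?_, ?_⟩
  · intro y hy
    have := List.eq_of_mem_replicate hy
    subst this
    show (0:ℤ) < 1; omega
  · exact qm_replicate_of_mod (by omega)
  · simp; omega
  · rintro ⟨a, b, ha3, hb3, hamem, ⟨hbmem, _⟩, hteq⟩
    have hrepl : oplus a b = List.replicate (3 * n) (1:ℤ) := by
      rcases hteq with ⟨k, hk⟩ | ⟨k, hk⟩
      · rw [hk, List.rotate_replicate]
      · rw [hk, List.reverse_replicate, List.rotate_replicate]
    have hane : a ≠ [] := by
      intro h; rw [h] at ha3; simp at ha3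
    have hbne : b ≠ [] := by
      intro h; rw [h] at hb3; simp at hb3
    obtain ⟨a₀, a', rfl⟩ := List.exists_cons_of_ne_nil hane
    obtain ⟨L, bl, rfl⟩ := (List.eq_nil_or_concat b).resolve_left hbne
    have ha₀ : (0:ℤ) < a₀ := hamem a₀ (by simp)
    have hbl : (0:ℤ) < bl := hbmem bl (by simp)
    have hhead : (oplus (a₀ :: a') (L.concat bl)).headD 0 = a₀ + bl := by
      unfold oplus
      rw [List.concat_eq_append, List.getLastD_concat]
      rfl
    rw [hrepl] at hhead
    have h3n : 3 * n ≠ 0 := by omega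
    obtain ⟨m, hm⟩ : ∃ m, 3 * n = m + 1 := ⟨3 * n - 1, by omega⟩
    rw [hm, List.replicate_succ] at hhead
    simp at hhead
    omega


end Stmt8Aux

/-- The irreducible λ-quiddities over `ℕ* = {1,2,3,…} ⊆ ℤ` are exactly the constant tuples
`(1,…,1)` of size `3n`, `n ≥ 1`. -/
theorem stmt8 (c : List ℤ) :
    IrreducibleQuiddity {x : ℤ | 0 < x} c ↔
      ∃ n : ℕ, 0 < n ∧ c = List.replicate (3 * n) (1 : ℤ) :=
  ⟨Stmt8Aux.forward, Stmt8Aux.backward⟩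
end
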